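/- Let Σ be a finite alphabet with at least two elements and let θ be a primitive substitution on Σ. Let X_θ⁺ = {x ∈ Σ^ℕ : every factor of x belongs to F[θ]} be the associated one-sided substitution subshift. Then the Hausdorff dimension of X_θ⁺ with respect to the PiNat metric equals 0. -/

import Mathlib

open MeasureTheory Filter
open List Topology
open scoped ENNReal NNReal

variable {A : Type*} [Fintype A]

/-- Give the finite alphabet the discrete topology. -/
instance : TopologicalSpace A := ⊥

instance : DiscreteTopology A := ⟨rfl⟩

/-- The PiNat metric on the sequence space `A^ℕ`:
`dist x y = (1/2)^(firstDiff x y)` for `x ≠ y`. -/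
noncomputable instance : MetricSpace (ℕ → A) := PiNat.metricSpace

instance : MeasurableSpace (ℕ → A) := borel _

instance : BorelSpace (ℕ → A) := ⟨rfl⟩

/- The blanket `⊥` topology instance above unfortunately applies to every type;
restore the canonical topologies on `ℝ` and `ℝ≥0∞` with higher priority. -/
instance (priority := 10000) : TopologicalSpace ℝ := UniformSpace.toTopologicalSpace
instance (priority := 10000) : TopologicalSpace ℝ≥0∞ := ENNReal.instTopologicalSpace

/-- The extension of a substitution `θ` to finite words, by concatenation. -/
def substWord {α : Type*} (θ : α → List α) : List α → List α :=
  fun w => w.foldr (fun a acc => θ a ++ acc) []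

/-- `θ` is a substitution: every letter maps to a nonempty word. -/
def IsSubstitution {α : Type*} (θ : α → List α) : Prop := ∀ a, θ a ≠ []

/-- `θ` is primitive: there is `k ≥ 1` such that for all letters `a, b`,
the letter `b` occurs in `θ^k(a)`. -/
def IsPrimitiveSubst {α : Type*} (θ : α → List α) : Prop :=
  ∃ k, 1 ≤ k ∧ ∀ a b : α, b ∈ (substWord θ)^[k] [a]

/-- The language `F[θ]` of all nonempty factors of the words `θ^m(a)`, `m ≥ 1`. -/
def substLang {α : Type*} (θ : α → List α) : Set (List α) :=
  {w | w ≠ [] ∧ ∃ m, 1 ≤ m ∧ ∃ a : α, w <:+: (substWord θ)^[m] [a]}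

section Comb
variable {α : Type*} (θ : α → List α)

theorem substWord_nil : substWord θ [] = [] := rfl

theorem substWord_cons (a : α) (u : List α) :
    substWord θ (a :: u) = θ a ++ substWord θ u := rfl

theorem substWord_append (u v : List α) :
    substWord θ (u ++ v) = substWord θ u ++ substWord θ v := by
  induction u with
  | nil => simp [substWord_nil]
  | cons a u ih => simp [substWord_cons, ih]

theorem iter_nil (m : ℕ) : (substWord θ)^[m] [] = [] := by
  induction m with
  | zero => rfl
  | succ m ih => rw [Function.iterate_succ_apply, substWord_nil, ih]

theorem iter_append (m : ℕ) (u v : List α) :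
    (substWord θ)^[m] (u ++ v) = (substWord θ)^[m] u ++ (substWord θ)^[m] v := by
  induction m generalizing u v with
  | zero => rfl
  | succ m ih => rw [Function.iterate_succ_apply, Function.iterate_succ_apply,
      Function.iterate_succ_apply, substWord_append, ih]

theorem iter_cons (m : ℕ) (a : α) (u : List α) :
    (substWord θ)^[m] (a :: u) = (substWord θ)^[m] [a] ++ (substWord θ)^[m] u := by
  have := iter_append θ m [a] u
  simpa using this

theorem iter_ne_nil (hsub : ∀ a, θ a ≠ []) (m : ℕ) (u : List α) (hu : u ≠ []) :
    (substWord θ)^[m] u ≠ [] := by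
  induction m generalizing u with
  | zero => simpa
  | succ m ih =>
      rw [Function.iterate_succ_apply]
      apply ih
      cases u with
      | nil => simp at hu
      | cons a u => simp [substWord_cons, hsub a]

theorem one_le_iter_len (hsub : ∀ a, θ a ≠ []) (m : ℕ) (a : α) :
    1 ≤ ((substWord θ)^[m] [a]).length :=
  List.length_pos_iff.mpr (iter_ne_nil θ hsub m [a] (by simp))

/-- lower bound on length of image of a word, given lower bound on blocks -/
theorem iter_len_lower {m c : ℕ} (hc : ∀ b : α, c ≤ ((substWord θ)^[m] [b]).length)
    (u : List α) : c * u.length ≤ ((substWord θ)^[m] u).length := by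
  induction u with
  | nil => simp
  | cons a u ih =>
      rw [iter_cons, List.length_append, List.length_cons, Nat.mul_succ]
      have := hc a
      omega

end Comb

section Comb2
variable {α : Type*} (θ : α → List α)

/-- upper bound: length of iterate of a word. -/
theorem substWord_len_upper {L : ℕ} (hL : ∀ a : α, (θ a).length ≤ L)
    (u : List α) : (substWord θ u).length ≤ L * u.length := by
  induction u with
  | nil => simp [substWord_nil]
  | cons a u ihu =>
      rw [substWord_cons, List.length_append, List.length_cons, Nat.mul_succ]
      have := hL a
      omega

/-- upper bound: length of iterate of a word. -/
theorem iter_len_upper {L : ℕ} (hL : ∀ a : α, (θ a).length ≤ L)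
    (m : ℕ) (u : List α) : ((substWord θ)^[m] u).length ≤ L ^ m * u.length := by
  induction m generalizing u with
  | zero => simp
  | succ m ih =>
      rw [Function.iterate_succ_apply]
      calc ((substWord θ)^[m] (substWord θ u)).length ≤ L ^ m * (substWord θ u).length := ih _
        _ ≤ L ^ m * (L * u.length) := Nat.mul_le_mul_left _ (substWord_len_upper θ hL u)
        _ = L ^ (m+1) * u.length := by ring

/-- growth: with primitivity, blocks at stage `j*k` have length ≥ 2^j. -/
theorem iter_len_growth (hsub : ∀ a, θ a ≠ [])
    {k : ℕ} (hk2 : ∀ b : α, 2 ≤ ((substWord θ)^[k] [b]).length)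
    (j : ℕ) (b : α) : 2 ^ j ≤ ((substWord θ)^[j * k] [b]).length := by
  induction j generalizing b with
  | zero => simpa using one_le_iter_len θ hsub 0 b
  | succ j ih =>
      have h1 : (substWord θ)^[(j+1) * k] [b] = (substWord θ)^[j*k] ((substWord θ)^[k] [b]) := by
        rw [← Function.iterate_add_apply]
        congr 1
        ring
      rw [h1]
      calc (2:ℕ) ^ (j+1) = 2 ^ j * 2 := by ring
        _ ≤ 2 ^ j * ((substWord θ)^[k] [b]).length := by gcongr; exact hk2 b
        _ ≤ _ := iter_len_lower θ (fun b => ih b) _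

/-- splitting an infix across a block decomposition -/
theorem infix_split {w B R : List α} (h : w <:+: B ++ R) (hw : w.length ≤ B.length) :
    w <:+: B ++ R.take w.length ∨ w <:+: R := by
  obtain ⟨s, t, hst⟩ := h
  by_cases hs : B.length ≤ s.length
  · right
    have hpre : B <+: s := by
      refine List.prefix_of_prefix_length_le (l₃ := B ++ R) (List.prefix_append B R) ?_ hs
      exact ⟨w ++ t, by simpa [List.append_assoc] using hst⟩
    obtain ⟨s', rfl⟩ := hpre
    refine ⟨s', t, ?_⟩
    rw [List.append_assoc, List.append_assoc] at hst
    have := (List.append_cancel_left hst : s' ++ (w ++ t) = R)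
    simpa [List.append_assoc] using this
  · left
    push_neg at hs
    have hpre1 : s ++ w <+: B ++ R := ⟨t, by simpa [List.append_assoc] using hst⟩
    have hpre2 : B ++ R.take w.length <+: B ++ R := ⟨R.drop w.length, by simp⟩
    have hlenst : s.length + w.length + t.length = B.length + R.length := by
      have := congrArg List.length hst
      simp at this
      omega
    have hlen : (s ++ w).length ≤ (B ++ R.take w.length).length := by
      simp only [List.length_append, List.length_take]
      omega
    obtain ⟨t', ht'⟩ := List.prefix_of_prefix_length_le hpre1 hpre2 hlen
    exact ⟨s, t', by simpa [List.append_assoc] using ht'⟩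

/-- localization: a short factor of an iterate image lies in a pair of blocks. -/
theorem factor_loc {m n : ℕ} (hblk : ∀ b : α, n ≤ ((substWord θ)^[m] [b]).length)
    (u w : List α) (hw : w ≠ []) (hwn : w.length ≤ n)
    (h : w <:+: (substWord θ)^[m] u) :
    ∃ b c : α, w <:+: (substWord θ)^[m] [b] ++ (substWord θ)^[m] [c] := by
  induction u with
  | nil =>
      rw [iter_nil] at h
      exact absurd (List.eq_nil_of_infix_nil h) hw
  | cons a u ih =>
      rw [iter_cons] at h
      have hwB : w.length ≤ ((substWord θ)^[m] [a]).length := hwn.trans (hblk a)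
      rcases infix_split h hwB with h1 | h2
      · cases u with
        | nil =>
            rw [iter_nil, List.take_nil, List.append_nil] at h1
            exact ⟨a, a, h1.trans ⟨[], (substWord θ)^[m] [a], by simp⟩⟩
        | cons c u' =>
            refine ⟨a, c, ?_⟩
            rw [iter_cons θ m c u',
              List.take_append_of_le_length (hwn.trans (hblk c))] at h1
            exact h1.trans ⟨[], ((substWord θ)^[m] [c]).drop w.length, by simp⟩
      · exact ih h2

end Comb2


section Loc
variable {α : Type*} (θ : α → List α)

/-- every length-`n` word of the language is a factor of a two-block word at a
controlled level. -/
theorem exists_loc (hsub : ∀ a, θ a ≠ [])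
    {k : ℕ} (hk2 : ∀ b : α, 2 ≤ ((substWord θ)^[k] [b]).length)
    {n : ℕ} {w : List α} (hw : w ∈ substLang θ) (hwl : w.length = n) :
    ∃ b c : α, ∃ j, j ≤ Nat.clog 2 n * k ∧
      w <:+: (substWord θ)^[j] [b] ++ (substWord θ)^[j] [c] := by
  obtain ⟨hne, M, hM1, a, hinf⟩ := hw
  set m := Nat.clog 2 n * k with hm
  by_cases hM : M ≤ m
  · exact ⟨a, a, M, hM, hinf.trans ⟨[], (substWord θ)^[M] [a], by simp⟩⟩
  · have hsplit : (substWord θ)^[M] [a] = (substWord θ)^[m] ((substWord θ)^[M-m] [a]) := by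
      rw [← Function.iterate_add_apply]
      congr 1
      omega
    rw [hsplit] at hinf
    have hblk : ∀ b : α, n ≤ ((substWord θ)^[m] [b]).length := fun b =>
      le_trans (Nat.le_pow_clog one_lt_two n) (iter_len_growth θ hsub hk2 (Nat.clog 2 n) b)
    obtain ⟨b, c, h⟩ := factor_loc θ hblk _ w hne (le_of_eq hwl) hinf
    exact ⟨b, c, m, le_rfl, h⟩

end Loc

/-- primitivity and two letters give blocks of length at least 2. -/
theorem two_le_block (hA : 2 ≤ Fintype.card A) (θ : A → List A)
    {k : ℕ} (hk : ∀ a b : A, b ∈ (substWord θ)^[k] [a]) (b : A) :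
    2 ≤ ((substWord θ)^[k] [b]).length := by
  obtain ⟨a₀, a₁, hne⟩ := Fintype.exists_pair_of_one_lt_card hA
  have h0 := hk b a₀
  have h1 := hk b a₁
  rcases hl : (substWord θ)^[k] [b] with _ | ⟨x, _ | ⟨y, tl⟩⟩
  · rw [hl] at h0; simp at h0
  · rw [hl] at h0 h1
    simp at h0 h1
    exact absurd (h0.trans h1.symm) hne
  · simp


set_option synthInstance.maxHeartbeats 1000000 in
/-- The one-sided substitution subshift `X_θ⁺` of a primitive substitution on a finite
alphabet with at least two letters has Hausdorff dimension `0` for the PiNat metric. -/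
theorem stmt_9 (hA : 2 ≤ Fintype.card A)
    (θ : A → List A) (hsub : IsSubstitution θ) (hprim : IsPrimitiveSubst θ) :
    dimH {x : ℕ → A | ∀ i n : ℕ, 1 ≤ n →
        ((List.range n).map fun j => x (i + j)) ∈ substLang θ} = 0 := by
  classical
  obtain ⟨k, hk1, hkmem⟩ := hprim
  have hk2 : ∀ b : A, 2 ≤ ((substWord θ)^[k] [b]).length := two_le_block hA θ hkmem
  have hAne : Nonempty A := Fintype.card_pos_iff.mp (by omega)
  set L : ℕ := Finset.univ.sup (fun a : A => (θ a).length) with hLdef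
  have hL : ∀ a : A, (θ a).length ≤ L := by
    intro a
    rw [hLdef]
    exact Finset.le_sup (f := fun a : A => (θ a).length) (Finset.mem_univ a)
  have hL1 : 1 ≤ L := by
    obtain ⟨a⟩ := hAne
    exact le_trans (List.length_pos_iff.mpr (hsub a)) (hL a)
  set s : Set (ℕ → A) := {x | ∀ i n : ℕ, 1 ≤ n →
      ((List.range n).map fun j => x (i + j)) ∈ substLang θ} with hsdef
  set m : ℕ → ℕ := fun n => Nat.clog 2 n * k with hmdef
  set l : ℕ → ℕ := fun n => 2 * L ^ m n with hldef
  set t : ∀ n : ℕ, A × A × Fin (m n + 1) × Fin (l n) → Set (ℕ → A) :=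
    fun n i => {x | ((List.range n).map fun j => x j)
      = (((substWord θ)^[i.2.2.1.1] [i.1] ++
          (substWord θ)^[i.2.2.1.1] [i.2.1]).drop i.2.2.2.1).take n} with htdef
  set r : ℕ → ℝ≥0∞ := fun n => ENNReal.ofReal ((1/2 : ℝ)^n) with hrdef
  have hr : Tendsto r atTop (𝓝 0) := by
    have := ENNReal.tendsto_ofReal
      (tendsto_pow_atTop_nhds_zero_of_lt_one (by norm_num) (by norm_num : (1/2:ℝ) < 1))
    simpa [hrdef] using this
  have hdiam : ∀ n i, EMetric.diam (t n i) ≤ r n := by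
    intro n i
    apply EMetric.diam_le
    intro x hx y hy
    simp only [htdef, Set.mem_setOf_eq] at hx hy
    have hmap := hx.trans hy.symm
    rw [List.map_inj_left] at hmap
    have hcyl : x ∈ PiNat.cylinder y n := fun i' hi' => hmap i' (List.mem_range.mpr hi')
    have hd : dist x y ≤ (1/2:ℝ)^n := PiNat.mem_cylinder_iff_dist_le.mp hcyl
    rw [edist_dist]
    exact ENNReal.ofReal_le_ofReal hd
  have hcov : ∀ n, 1 ≤ n → s ⊆ ⋃ i, t n i := by
    intro n hn x hx
    have hw := hx 0 n hn
    set w : List A := (List.range n).map (fun j => x (0 + j)) with hwdef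
    have hweq : w = (List.range n).map fun j => x j := by
      simp [hwdef]
    have hwl : w.length = n := by simp [hwdef]
    obtain ⟨b, c, j, hj, hinf⟩ := exists_loc θ hsub hk2 hw hwl
    obtain ⟨sl, tl, hstl⟩ := hinf
    have hjm : j < m n + 1 := by
      simp only [hmdef]
      omega
    have hZlen : ((substWord θ)^[j] [b]).length + ((substWord θ)^[j] [c]).length ≤ l n := by
      have h1 := iter_len_upper θ hL j [b]
      have h2 := iter_len_upper θ hL j [c]
      simp only [List.length_cons, List.length_nil, Nat.mul_one] at h1 h2
      have h3 : L ^ j ≤ L ^ m n := Nat.pow_le_pow_right hL1 hj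
      simp only [hldef]
      calc ((substWord θ)^[j] [b]).length + ((substWord θ)^[j] [c]).length
          ≤ L ^ j + L ^ j := Nat.add_le_add (by simpa using h1) (by simpa using h2)
        _ ≤ 2 * L ^ m n := by omega
    have hp : sl.length < l n := by
      have hlen := congrArg List.length hstl
      simp only [List.length_append] at hlen
      have hwn := hwl
      omega
    refine Set.mem_iUnion.mpr ⟨⟨b, c, ⟨j, hjm⟩, ⟨sl.length, hp⟩⟩, ?_⟩
    simp only [htdef, Set.mem_setOf_eq]
    rw [← hweq, ← hstl, List.append_assoc, List.drop_left, ← hwl, List.take_left]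
  -- main dimension estimate
  have key : ∀ d : ℝ≥0, 0 < d → dimH s ≤ (d : ℝ≥0∞) := by
    intro d hd
    set qr : ℝ := (1/2 : ℝ) ^ (d : ℝ) with hqrdef
    have hqr0 : 0 < qr := Real.rpow_pos_of_pos (by norm_num) _
    have hqr1 : qr < 1 := Real.rpow_lt_one (by norm_num) (by norm_num) (by exact_mod_cast hd)
    set β : ℕ := Nat.clog 2 (L ^ k) with hβdef
    set C : ℕ := Fintype.card A * Fintype.card A * ((k+1) * (2 * 2 ^ β)) with hCdef
    set c : ℕ → ℕ := fun n => Fintype.card A * (Fintype.card A * ((m n + 1) * l n)) with hcdef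
    have hcard : ∀ n, Fintype.card (A × A × Fin (m n + 1) × Fin (l n)) = c n := by
      intro n
      simp [hcdef, Fintype.card_prod]
    have hcbound : ∀ n, 2 ≤ n → c n ≤ C * n ^ (β + 1) := by
      intro n hn
      have hclog1 : 1 ≤ Nat.clog 2 n := Nat.clog_pos one_lt_two (by omega)
      have h2clog : 2 ^ Nat.clog 2 n ≤ 2 * n := by
        have h := Nat.pow_pred_clog_lt_self one_lt_two (show 1 < n by omega)
        calc 2 ^ Nat.clog 2 n = 2 * 2 ^ (Nat.clog 2 n - 1) := by
              rw [← pow_succ']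
              congr 1
              omega
          _ ≤ 2 * n := Nat.mul_le_mul_left 2 (le_of_lt h)
      have hclogn : Nat.clog 2 n ≤ n :=
        le_trans (Nat.clog_mono_right 2 (Nat.lt_two_pow_self (n := n)).le)
          (le_of_eq (Nat.clog_pow 2 n one_lt_two))
      have hLm : L ^ m n ≤ 2 ^ β * n ^ β := by
        calc L ^ m n = (L ^ k) ^ Nat.clog 2 n := by
              simp only [hmdef]
              rw [mul_comm, pow_mul]
          _ ≤ (2 ^ β) ^ Nat.clog 2 n :=
              Nat.pow_le_pow_left (Nat.le_pow_clog one_lt_two _) _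
          _ = (2 ^ Nat.clog 2 n) ^ β := by rw [← pow_mul, ← pow_mul, mul_comm]
          _ ≤ (2 * n) ^ β := Nat.pow_le_pow_left h2clog β
          _ = 2 ^ β * n ^ β := by rw [mul_pow]
      have hm1 : m n + 1 ≤ (k+1) * n := by
        have : m n ≤ n * k := by
          simp only [hmdef]
          exact Nat.mul_le_mul_right k hclogn
        nlinarith
      have hln : l n ≤ 2 * (2 ^ β * n ^ β) := by
        simp only [hldef]
        omega
      calc c n = Fintype.card A * (Fintype.card A * ((m n + 1) * l n)) := rfl
        _ ≤ Fintype.card A * (Fintype.card A * (((k+1) * n) * (2 * (2 ^ β * n ^ β)))) := by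
            exact Nat.mul_le_mul_left _ (Nat.mul_le_mul_left _ (Nat.mul_le_mul hm1 hln))
        _ = C * n ^ (β + 1) := by
            simp only [hCdef]
            ring
    have hμ : μH[(d:ℝ)] s = 0 := by
      have hS := Measure.hausdorffMeasure_le_liminf_sum (d:ℝ) s r hr t
        (Eventually.of_forall hdiam) (eventually_atTop.mpr ⟨1, fun n hn => hcov n hn⟩)
      have hsum : ∀ n, (∑ i, EMetric.diam (t n i) ^ (d:ℝ)) ≤
          ENNReal.ofReal ((c n : ℝ) * qr ^ n) := by
        intro n
        have hq : ((1/2:ℝ)^n) ^ (d:ℝ) = qr ^ n := by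
          rw [← Real.rpow_natCast (1/2:ℝ) n, ← Real.rpow_mul (by norm_num), mul_comm,
            Real.rpow_mul (by norm_num), Real.rpow_natCast]
        calc (∑ i, EMetric.diam (t n i) ^ (d:ℝ))
            ≤ ∑ _i : A × A × Fin (m n + 1) × Fin (l n), (r n)^(d:ℝ) :=
              Finset.sum_le_sum (fun i _ => ENNReal.rpow_le_rpow (hdiam n i) (by positivity))
          _ = (c n : ℝ≥0∞) * (r n)^(d:ℝ) := by
              rw [Finset.sum_const, Finset.card_univ, hcard n, nsmul_eq_mul]
          _ = ENNReal.ofReal ((c n : ℝ) * qr ^ n) := by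
              simp only [hrdef]
              have hr1 : ENNReal.ofReal ((1/2:ℝ)^n) ^ (d:ℝ) = ENNReal.ofReal (qr ^ n) := by
                rw [ENNReal.ofReal_rpow_of_pos (pow_pos (by norm_num) n), hq]
              rw [hr1, ← ENNReal.ofReal_natCast (c n),
                ← ENNReal.ofReal_mul (Nat.cast_nonneg _)]
      have hreal : Tendsto (fun n : ℕ => (c n : ℝ) * qr ^ n) atTop (𝓝 0) := by
        have hnorm : ‖qr‖ < 1 := by
          rw [Real.norm_eq_abs, abs_of_pos hqr0]
          exact hqr1
        have hg : Tendsto (fun n : ℕ => (C:ℝ) * ((n:ℝ)^(β+1) * qr^n)) atTop (𝓝 0) := by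
          have := ((summable_pow_mul_geometric_of_norm_lt_one (β+1)
            hnorm).tendsto_atTop_zero).const_mul (C:ℝ)
          simpa using this
        apply squeeze_zero' (Eventually.of_forall fun n => by positivity)
          (eventually_atTop.mpr ⟨2, fun n hn => ?_⟩) hg
        have hcb : (c n : ℝ) ≤ (C:ℝ) * (n:ℝ)^(β+1) := by
          have := hcbound n hn
          exact_mod_cast this
        calc (c n : ℝ) * qr ^ n ≤ ((C:ℝ) * (n:ℝ)^(β+1)) * qr ^ n :=
              mul_le_mul_of_nonneg_right hcb (by positivity)
          _ = (C:ℝ) * ((n:ℝ)^(β+1) * qr^n) := by ring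
      have hlim : Tendsto (fun n : ℕ => ENNReal.ofReal ((c n : ℝ) * qr ^ n)) atTop (𝓝 0) := by
        simpa using ENNReal.tendsto_ofReal hreal
      have hle : μH[(d:ℝ)] s ≤ 0 := by
        refine le_trans hS ?_
        have h1 : liminf (fun n => ∑ i, EMetric.diam (t n i) ^ (d:ℝ)) atTop ≤
            liminf (fun n : ℕ => ENNReal.ofReal ((c n : ℝ) * qr ^ n)) atTop :=
          liminf_le_liminf (Eventually.of_forall hsum)
        rw [hlim.liminf_eq] at h1
        exact h1
      exact le_zero_iff.mp hle
    exact dimH_le_of_hausdorffMeasure_ne_top (by rw [hμ]; exact ENNReal.zero_ne_top)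
  refine le_antisymm ?_ zero_le
  refine ENNReal.le_of_forall_pos_le_add fun ε hε _ => ?_
  rw [zero_add]
  exact key ε hε
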